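/- Suppose every (c+2)-element subset of the set M_{c,t} of 2t+c linear forms generates a complete intersection (is linearly independent over K), where n+1 > c. Then the scheme Z_{c,t} defined by I_{Z_{c,t}} is a generalized stick figure: for any three pairwise distinct ideals P_1, P_2, P_3 occurring as components in the defining intersection of I_{Z_{c,t}}, the ideal P_1 + P_2 + P_3 has height at least c+2; equivalently, at least c+2 distinct linear forms of M_{c,t} occur among the 3c listed generators of P_1, P_2, P_3. -/

import Mathlib

open MvPolynomial

namespace GorensteinSI

/-- The linear form attached to position `p` (0-based) in a component of `Z_{c,t}`:
the forms alternate `M_{i_1}, L_{i_2}, M_{i_3}, L_{i_4}, …`. -/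
noncomputable def formA {K : Type} [Field K] {n : ℕ}
    (M L : ℕ → MvPolynomial (Fin (n + 1)) K) (p idx : ℕ) :
    MvPolynomial (Fin (n + 1)) K :=
  if p % 2 = 0 then M idx else L idx

/-- Admissibility of an index vector `(i_1,…,i_c)` (0-based: `i 0, …, i (c−1)`) for a
component of `Z_{c,t}`:  `0 ≤ i_1 ≤ i_2 < i_3 ≤ i_4 < ⋯` with the last index bounded by
`t + ⌊(c−2)/2⌋` if `c` is even and by `t + ⌊(c−1)/2⌋` if `c` is odd (when `c` is even the
two bounds agree, so we use `t + (c−1)/2` in natural number division). -/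
def admissA (c t : ℕ) (i : ℕ → ℕ) : Prop :=
  (∀ p, p + 1 < c → (if p % 2 = 0 then i p ≤ i (p + 1) else i p < i (p + 1))) ∧
    (i (c - 1) : ℤ) ≤ (t : ℤ) + ((c : ℤ) - 1).fdiv 2

/-- The set of the `c` linear forms generating the component of `Z_{c,t}` with index
vector `i`. -/
noncomputable def gensA {K : Type} [Field K] {n : ℕ}
    (M L : ℕ → MvPolynomial (Fin (n + 1)) K) (c : ℕ) (i : ℕ → ℕ) :
    Set (MvPolynomial (Fin (n + 1)) K) :=
  {q | ∃ p < c, q = formA M L p (i p)}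

/-- Membership in the set `M_{c,t} = {M_0,…,M_{t+⌊(c−1)/2⌋}, L_0,…,L_{t+⌊(c−2)/2⌋}}`,
encoded by indices: `Sum.inl k` stands for `M_k` and `Sum.inr k` for `L_k`. -/
def validMct (c t : ℕ) : ℕ ⊕ ℕ → Prop :=
  fun x => match x with
    | Sum.inl k => (k : ℤ) ≤ (t : ℤ) + ((c : ℤ) - 1).fdiv 2
    | Sum.inr k => (k : ℤ) ≤ (t : ℤ) + ((c : ℤ) - 2).fdiv 2

/-! ### Auxiliary machinery -/


lemma natCast_fdiv (m k : ℕ) : ((m:ℤ)).fdiv (k:ℤ) = ((m / k : ℕ) : ℤ) := by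
  cases m <;> simp [Int.fdiv, Int.ofNat_fdiv]

lemma natCast_fdiv_two (m : ℕ) : ((m:ℤ)).fdiv 2 = ((m / 2 : ℕ) : ℤ) := by
  have : ((2:ℕ):ℤ) = (2:ℤ) := by norm_num
  rw [← this, natCast_fdiv]

/-- The numeric code of the linear form at position `p` of a component:
`M_k ↦ 2k`, `L_k ↦ 2k+1`. -/
def gval (i : ℕ → ℕ) (p : ℕ) : ℕ := 2 * i p + p % 2

lemma gval_strictmono {c : ℕ} {i : ℕ → ℕ}
    (h : ∀ p, p + 1 < c → (if p % 2 = 0 then i p ≤ i (p + 1) else i p < i (p + 1))) :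
    ∀ q, q < c → ∀ p, p < q → gval i p < gval i q := by
  intro q
  induction q with
  | zero => intro _ p hp; omega
  | succ q ih =>
    intro hq p hp
    have hstep : gval i q < gval i (q+1) := by
      have hh := h q (by omega)
      unfold gval
      split_ifs at hh <;> omega
    rcases Nat.lt_succ_iff_lt_or_eq.mp hp with h' | h'
    · exact lt_trans (ih (by omega) p h') hstep
    · subst h'; exact hstep

lemma gval_injOn {c : ℕ} {i : ℕ → ℕ}
    (h : ∀ p, p + 1 < c → (if p % 2 = 0 then i p ≤ i (p + 1) else i p < i (p + 1))) :
    ∀ x, x < c → ∀ y, y < c → gval i x = gval i y → x = y := by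
  intro x hx y hy hxy
  rcases lt_trichotomy x y with hl | he | hl
  · exact absurd hxy (Nat.ne_of_lt (gval_strictmono h y hy x hl))
  · exact he
  · exact absurd hxy.symm (Nat.ne_of_lt (gval_strictmono h x hx y hl))

lemma gval_le {c t : ℕ} {i : ℕ → ℕ} (hc : 1 ≤ c) (h : admissA c t i) :
    ∀ p, p < c → gval i p ≤ 2 * t + c - 1 := by
  have hlast : gval i (c-1) ≤ 2*t + c - 1 := by
    have h2 := h.2
    rw [show ((c:ℤ)-1) = ((c-1:ℕ):ℤ) by omega, natCast_fdiv_two] at h2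
    have hle : i (c-1) ≤ t + (c-1)/2 := by exact_mod_cast h2
    unfold gval
    omega
  intro p hp
  rcases eq_or_lt_of_le (Nat.le_pred_of_lt hp) with he | hl
  · rw [he]; exact hlast
  · exact le_trans (le_of_lt (gval_strictmono h.1 (c-1) (by omega) p hl)) hlast

/-- The code set of a component. -/
def Vset (c : ℕ) (i : ℕ → ℕ) : Finset ℕ := (Finset.range c).image (gval i)

lemma Vset_card {c t : ℕ} {i : ℕ → ℕ} (h : admissA c t i) : (Vset c i).card = c := by
  rw [Vset, Finset.card_image_of_injOn, Finset.card_range]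
  intro x hx y hy
  simp only [Finset.coe_range, Set.mem_Iio] at hx hy
  exact gval_injOn h.1 x hx y hy

/-- "Balanced" set: each element's parity equals its rank's parity. -/
def Bal (V : Finset ℕ) : Prop := ∀ v ∈ V, (V.filter (· < v)).card % 2 = v % 2

lemma Bal_Vset {c t : ℕ} {i : ℕ → ℕ} (h : admissA c t i) : Bal (Vset c i) := by
  intro v hv
  simp only [Vset, Finset.mem_image, Finset.mem_range] at hv
  obtain ⟨p, hp, rfl⟩ := hv
  have hfil : (Vset c i).filter (· < gval i p) = (Finset.range p).image (gval i) := by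
    ext w
    simp only [Vset, Finset.mem_filter, Finset.mem_image, Finset.mem_range]
    constructor
    · rintro ⟨⟨q, hq, rfl⟩, hlt⟩
      refine ⟨q, ?_, rfl⟩
      by_contra hge
      push_neg at hge
      rcases eq_or_lt_of_le hge with he | hl
      · rw [he] at hlt; exact lt_irrefl _ hlt
      · exact absurd hlt (not_lt.mpr (le_of_lt (gval_strictmono h.1 q hq p hl)))
    · rintro ⟨q, hqp, rfl⟩
      exact ⟨⟨q, by omega, rfl⟩, gval_strictmono h.1 p hp q hqp⟩
  rw [hfil, Finset.card_image_of_injOn, Finset.card_range]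
  · unfold gval; omega
  · intro x hx y hy
    simp only [Finset.coe_range, Set.mem_Iio] at hx hy
    exact gval_injOn h.1 x (by omega) y (by omega)

/-- Two balanced sets obtained by removing elements `a < b < d` from `U` (with `b ∈ U`)
are impossible: parity contradiction at `b`. -/
lemma middle_contradiction {U : Finset ℕ} {a b d : ℕ} (ha : a ∈ U) (hb : b ∈ U)
    (hab : a < b) (hbd : b < d)
    (hBa : Bal (U.erase a)) (hBd : Bal (U.erase d)) : False := by
  have hba : b ∈ U.erase a := Finset.mem_erase.mpr ⟨by omega, hb⟩
  have hbd' : b ∈ U.erase d := Finset.mem_erase.mpr ⟨by omega, hb⟩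
  have e1 := hBa b hba
  have e2 := hBd b hbd'
  rw [Finset.filter_erase] at e1 e2
  have hd : d ∉ (U.filter (· < b)) := by
    simp only [Finset.mem_filter]
    rintro ⟨-, hdb⟩
    omega
  rw [Finset.erase_eq_of_notMem hd] at e2
  have haf : a ∈ U.filter (· < b) := Finset.mem_filter.mpr ⟨ha, hab⟩
  have hcard := Finset.card_erase_of_mem haf
  have hpos : 1 ≤ (U.filter (· < b)).card := Finset.card_pos.mpr ⟨a, haf⟩
  omega

/-- Three pairwise-distinct balanced `c`-sets have at least `c+2` elements in total. -/
lemma combin {c : ℕ} {V1 V2 V3 : Finset ℕ}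
    (c1 : V1.card = c) (c2 : V2.card = c) (c3 : V3.card = c)
    (b1 : Bal V1) (b2 : Bal V2) (b3 : Bal V3)
    (h12 : V1 ≠ V2) (h13 : V1 ≠ V3) (h23 : V2 ≠ V3) :
    c + 2 ≤ (V1 ∪ V2 ∪ V3).card := by
  set U := V1 ∪ V2 ∪ V3 with hU
  by_contra hlt
  push_neg at hlt
  have hs1 : V1 ⊆ U := (Finset.subset_union_left.trans Finset.subset_union_left)
  have hs2 : V2 ⊆ U := (Finset.subset_union_right.trans Finset.subset_union_left)
  have hs3 : V3 ⊆ U := Finset.subset_union_right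
  have hcle : c ≤ U.card := c1 ▸ Finset.card_le_card hs1
  have hUc : U.card = c + 1 := by
    rcases (by omega : U.card = c ∨ U.card = c + 1) with h | h
    · exfalso
      apply h12
      rw [Finset.eq_of_subset_of_card_le hs1 (by omega),
        Finset.eq_of_subset_of_card_le hs2 (by omega)]
    · exact h
  have hx : ∀ V : Finset ℕ, V ⊆ U → V.card = c → ∃ x ∈ U, V = U.erase x := by
    intro V hsub hcard
    have h1 : (U \ V).card = 1 := by rw [Finset.card_sdiff_of_subset hsub]; omega
    obtain ⟨x, hxe⟩ := Finset.card_eq_one.mp h1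
    have hxU : x ∈ U := by
      have : x ∈ U \ V := hxe ▸ Finset.mem_singleton_self x
      exact (Finset.mem_sdiff.mp this).1
    refine ⟨x, hxU, ?_⟩
    have h2 : U \ (U \ V) = V := Finset.sdiff_sdiff_eq_self hsub
    rw [hxe] at h2
    rw [← h2, Finset.sdiff_singleton_eq_erase]
  obtain ⟨x1, hx1U, e1⟩ := hx V1 hs1 c1
  obtain ⟨x2, hx2U, e2⟩ := hx V2 hs2 c2
  obtain ⟨x3, hx3U, e3⟩ := hx V3 hs3 c3
  have d12 : x1 ≠ x2 := by rintro rfl; exact h12 (by rw [e1, e2])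
  have d13 : x1 ≠ x3 := by rintro rfl; exact h13 (by rw [e1, e3])
  have d23 : x2 ≠ x3 := by rintro rfl; exact h23 (by rw [e2, e3])
  rw [e1] at b1; rw [e2] at b2; rw [e3] at b3
  rcases lt_trichotomy x1 x2 with h12' | h12' | h12' <;>
    rcases lt_trichotomy x2 x3 with h23' | h23' | h23' <;>
      rcases lt_trichotomy x1 x3 with h13' | h13' | h13'
  all_goals first
    | omega
    | exact middle_contradiction hx1U hx2U h12' h23' b1 b3
    | exact middle_contradiction hx1U hx3U h13' (by omega : x3 < x2) b1 b2
    | exact middle_contradiction hx2U hx1U (by omega : x2 < x1) h13' b2 b3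
    | exact middle_contradiction hx3U hx1U (by omega : x3 < x1) h12' b3 b2
    | exact middle_contradiction hx2U hx3U h23' (by omega : x3 < x1) b2 b1
    | exact middle_contradiction hx3U hx2U (by omega : x3 < x2) (by omega : x2 < x1) b3 b1

/-! ### Decoding codes back to forms -/

noncomputable def psiForm {K : Type} [Field K] {n : ℕ}
    (M L : ℕ → MvPolynomial (Fin (n + 1)) K) (v : ℕ) : MvPolynomial (Fin (n + 1)) K :=
  if v % 2 = 0 then M (v / 2) else L (v / 2)

def decode (v : ℕ) : ℕ ⊕ ℕ := if v % 2 = 0 then Sum.inl (v / 2) else Sum.inr (v / 2)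

lemma decode_inj : Function.Injective decode := by
  intro v w h
  unfold decode at h
  split_ifs at h <;> simp_all <;> omega

lemma elim_decode {K : Type} [Field K] {n : ℕ} (M L : ℕ → MvPolynomial (Fin (n+1)) K)
    (v : ℕ) : Sum.elim M L (decode v) = psiForm M L v := by
  unfold decode psiForm; split_ifs <;> rfl

lemma psiForm_gval {K : Type} [Field K] {n : ℕ} (M L : ℕ → MvPolynomial (Fin (n+1)) K)
    (i : ℕ → ℕ) (p : ℕ) : psiForm M L (gval i p) = formA M L p (i p) := by
  rcases Nat.mod_two_eq_zero_or_one p with h | h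
  · have e1 : gval i p % 2 = 0 := by unfold gval; omega
    have e2 : gval i p / 2 = i p := by unfold gval; omega
    simp [psiForm, formA, e1, e2, h]
  · have e1 : gval i p % 2 = 1 := by unfold gval; omega
    have e2 : gval i p / 2 = i p := by unfold gval; omega
    simp [psiForm, formA, e1, e2, h]

lemma valid_decode {c t : ℕ} (hc : 1 ≤ c) {v : ℕ} (hv : v ≤ 2*t + c - 1) :
    validMct c t (decode v) := by
  unfold decode
  split_ifs with hpar
  · show ((v/2 : ℕ) : ℤ) ≤ (t : ℤ) + ((c:ℤ) - 1).fdiv 2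
    rw [show ((c:ℤ)-1) = ((c-1:ℕ):ℤ) by omega, natCast_fdiv_two]
    omega
  · show ((v/2 : ℕ) : ℤ) ≤ (t : ℤ) + ((c:ℤ) - 2).fdiv 2
    rcases eq_or_lt_of_le hc with h1 | h2
    · have he : ((c:ℤ) - 2).fdiv 2 = -1 := by
        rw [← h1]; decide
      rw [he]
      omega
    · rw [show ((c:ℤ)-2) = ((c-2:ℕ):ℤ) by omega, natCast_fdiv_two]
      omega

lemma gensA_eq_image {K : Type} [Field K] {n : ℕ}
    (M L : ℕ → MvPolynomial (Fin (n + 1)) K) (c : ℕ) (i : ℕ → ℕ) :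
    gensA M L c i = psiForm M L '' (↑(Vset c i) : Set ℕ) := by
  ext q
  simp only [gensA, Set.mem_setOf_eq, Set.mem_image, Vset, Finset.coe_image,
    Finset.coe_range, Set.mem_image, Set.mem_Iio]
  constructor
  · rintro ⟨p, hp, rfl⟩
    exact ⟨gval i p, ⟨p, hp, rfl⟩, (psiForm_gval M L i p)⟩
  · rintro ⟨v, ⟨p, hp, rfl⟩, rfl⟩
    exact ⟨p, hp, (psiForm_gval M L i p)⟩

/-- Theorem 4.1 (last part):  if every `(c+2)`-element subset of the `2t+c` linear forms
`M_{c,t}` is linearly independent then the scheme `Z_{c,t}` (defined by the intersection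
`I_{Z_{c,t}}` of the component ideals `(M_{i_1}, L_{i_2}, M_{i_3}, …)`) is a generalized
stick figure: among the `3c` generators of any three pairwise distinct components at
least `c+2` distinct linear forms of `M_{c,t}` occur (equivalently, the sum of the three
component ideals has height at least `c+2`). -/
theorem Z_is_generalized_stick_figure {K : Type} [Field K] {n c t : ℕ}
    (hc : 1 ≤ c) (hcn : c < n + 1)
    (M L : ℕ → MvPolynomial (Fin (n + 1)) K)
    (hMlin : ∀ k : ℕ, (k : ℤ) ≤ (t : ℤ) + ((c : ℤ) - 1).fdiv 2 → (M k).IsHomogeneous 1)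
    (hLlin : ∀ k : ℕ, (k : ℤ) ≤ (t : ℤ) + ((c : ℤ) - 2).fdiv 2 → (L k).IsHomogeneous 1)
    (hindep : ∀ S : Finset (ℕ ⊕ ℕ), (↑S ⊆ {x | validMct c t x}) → S.card ≤ c + 2 →
      LinearIndependent K (fun j : S => Sum.elim M L j.1)) :
    ∀ i₁ i₂ i₃ : ℕ → ℕ, admissA c t i₁ → admissA c t i₂ → admissA c t i₃ →
      Ideal.span (gensA M L c i₁) ≠ Ideal.span (gensA M L c i₂) →
      Ideal.span (gensA M L c i₁) ≠ Ideal.span (gensA M L c i₃) →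
      Ideal.span (gensA M L c i₂) ≠ Ideal.span (gensA M L c i₃) →
      c + 2 ≤ (gensA M L c i₁ ∪ gensA M L c i₂ ∪ gensA M L c i₃).ncard := by
  intro i₁ i₂ i₃ h1 h2 h3 ne12 ne13 ne23
  classical
  -- `psiForm` is injective on valid codes, by linear independence of pairs
  have hinj : Set.InjOn (psiForm M L) {v : ℕ | v ≤ 2*t + c - 1} := by
    intro v hv w hw hvw
    by_contra hne
    have hdec : decode v ≠ decode w := fun h => hne (decode_inj h)
    have hSsub : ↑({decode v, decode w} : Finset (ℕ ⊕ ℕ)) ⊆ {x | validMct c t x} := by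
      intro x hx
      simp only [Finset.coe_insert, Finset.coe_singleton, Set.mem_insert_iff,
        Set.mem_singleton_iff] at hx
      rcases hx with rfl | rfl
      · exact valid_decode hc hv
      · exact valid_decode hc hw
    have hScard : ({decode v, decode w} : Finset (ℕ ⊕ ℕ)).card ≤ c + 2 := by
      refine le_trans (Finset.card_insert_le _ _) ?_
      simp only [Finset.card_singleton]
      omega
    have hLI := hindep _ hSsub hScard
    have hv' : decode v ∈ ({decode v, decode w} : Finset (ℕ ⊕ ℕ)) := by simp
    have hw' : decode w ∈ ({decode v, decode w} : Finset (ℕ ⊕ ℕ)) := by simp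
    have heq : (⟨decode v, hv'⟩ : ({decode v, decode w} : Finset (ℕ ⊕ ℕ))) = ⟨decode w, hw'⟩ :=
      hLI.injective (by simp only [elim_decode]; exact hvw)
    exact hdec (congrArg Subtype.val heq)
  have hsub : ∀ i : ℕ → ℕ, admissA c t i →
      (↑(Vset c i) : Set ℕ) ⊆ {v : ℕ | v ≤ 2*t + c - 1} := by
    intro i hi v hv
    simp only [Vset, Finset.coe_image, Finset.coe_range, Set.mem_image, Set.mem_Iio] at hv
    obtain ⟨p, hp, rfl⟩ := hv
    exact gval_le hc hi p hp
  have key : gensA M L c i₁ ∪ gensA M L c i₂ ∪ gensA M L c i₃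
      = psiForm M L '' (↑(Vset c i₁ ∪ Vset c i₂ ∪ Vset c i₃) : Set ℕ) := by
    rw [gensA_eq_image, gensA_eq_image, gensA_eq_image, Finset.coe_union, Finset.coe_union,
      Set.image_union, Set.image_union]
  have hsubU : (↑(Vset c i₁ ∪ Vset c i₂ ∪ Vset c i₃) : Set ℕ) ⊆ {v : ℕ | v ≤ 2*t + c - 1} := by
    rw [Finset.coe_union, Finset.coe_union]
    exact Set.union_subset (Set.union_subset (hsub i₁ h1) (hsub i₂ h2)) (hsub i₃ h3)
  have hne : ∀ i j : ℕ → ℕ, admissA c t i → admissA c t j →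
      Ideal.span (gensA M L c i) ≠ Ideal.span (gensA M L c j) → Vset c i ≠ Vset c j := by
    intro i j _ _ hnesp h
    exact hnesp (by rw [gensA_eq_image, gensA_eq_image, h])
  rw [key, Set.ncard_image_of_injOn (hinj.mono hsubU), Set.ncard_coe_finset]
  exact combin (Vset_card h1) (Vset_card h2) (Vset_card h3)
    (Bal_Vset h1) (Bal_Vset h2) (Bal_Vset h3)
    (hne i₁ i₂ h1 h2 ne12) (hne i₁ i₃ h1 h3 ne13) (hne i₂ i₃ h2 h3 ne23)

end GorensteinSI
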